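/- For every k ≥ 2 and every n ≥ 0, p_k(n) ≥ 2^{⌊√(2n/3 + 1/4) − 1/2⌋}. -/

import Mathlib

/-- The number of `k`-regular partitions of `n`: partitions of `n` with no part divisible
by `k`. -/
def regularPartitions (k n : ℕ) : ℕ :=
  (Finset.univ.filter fun p : n.Partition => ∀ i ∈ p.parts, ¬ k ∣ i).card

/-- Pick, among `2i` and `2i+1`, one that isn't divisible by `k`. -/
def bfun (k i : ℕ) : ℕ := if k ∣ (2 * i + 1) then 2 * i else 2 * i + 1

lemma bfun_le (k i : ℕ) : bfun k i ≤ 2 * i + 1 := by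
  unfold bfun; split <;> omega

lemma bfun_ge (k i : ℕ) : 2 * i ≤ bfun k i := by
  unfold bfun; split <;> omega

lemma bfun_strictMono (k : ℕ) : StrictMono (bfun k) := by
  apply strictMono_nat_of_lt_succ
  intro i
  have h1 := bfun_le k i
  have h2 := bfun_ge k (i + 1)
  omega

lemma bfun_not_dvd (k : ℕ) (hk : 2 ≤ k) (i : ℕ) (hi : 1 ≤ i) : ¬ k ∣ bfun k i := by
  unfold bfun
  split
  · rename_i h
    intro h2
    have h3 : k ∣ 1 := by simpa using Nat.dvd_sub h h2
    have := Nat.le_of_dvd one_pos h3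
    omega
  · rename_i h; exact h

lemma sum_Icc_odd (m : ℕ) : (Finset.Icc 1 m).sum (fun i => 2 * i + 1) = m * m + 2 * m := by
  induction m with
  | zero => simp
  | succ m ih =>
    rw [Finset.sum_Icc_succ_top (by omega), ih]
    ring

lemma key (k n m : ℕ) (hk : 2 ≤ k) (h : 3 * (m * (m + 1)) ≤ 2 * n) :
    2 ^ m ≤ regularPartitions k n := by
  classical
  have hsum : ∀ S : Finset ℕ, S ⊆ Finset.Icc 1 m → S.sum (bfun k) ≤ n := by
    intro S hS
    have h1 : S.sum (bfun k) ≤ (Finset.Icc 1 m).sum (bfun k) :=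
      Finset.sum_le_sum_of_subset hS
    have h2 : (Finset.Icc 1 m).sum (bfun k) ≤ (Finset.Icc 1 m).sum (fun i => 2 * i + 1) :=
      Finset.sum_le_sum (fun i _ => bfun_le k i)
    rw [sum_Icc_odd] at h2
    nlinarith
  let f : Finset ℕ → n.Partition := fun S =>
    if hS : S ⊆ Finset.Icc 1 m then
      { parts := S.val.map (bfun k) + Multiset.replicate (n - S.sum (bfun k)) 1,
        parts_pos := by
          intro i hi
          rw [Multiset.mem_add] at hi
          rcases hi with hi | hi
          · obtain ⟨j, hj, rfl⟩ := Multiset.mem_map.mp hi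
            have := bfun_ge k j
            have hj1 : 1 ≤ j := (Finset.mem_Icc.mp (hS hj)).1
            omega
          · rw [Multiset.eq_of_mem_replicate hi]; omega
        parts_sum := by
          rw [Multiset.sum_add, Multiset.sum_replicate, smul_eq_mul, mul_one]
          have hss : (S.val.map (bfun k)).sum = S.sum (bfun k) := rfl
          rw [hss]
          have := hsum S hS
          omega }
    else ⟨Multiset.replicate n 1, by
        intro i hi; rw [Multiset.eq_of_mem_replicate hi]; omega, by simp⟩
  have hfilt : ∀ S : Finset ℕ, S ⊆ Finset.Icc 1 m →
      Multiset.filter (fun x => x ≠ 1) (f S).parts = S.val.map (bfun k) := by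
    intro S hS
    show Multiset.filter _ (dite _ _ _ : n.Partition).parts = _
    rw [dif_pos hS]
    show Multiset.filter _ (S.val.map (bfun k) + Multiset.replicate _ 1) = _
    rw [Multiset.filter_add]
    have e1 : Multiset.filter (fun x => x ≠ 1) (S.val.map (bfun k)) = S.val.map (bfun k) := by
      rw [Multiset.filter_eq_self]
      intro a ha
      obtain ⟨j, hj, rfl⟩ := Multiset.mem_map.mp ha
      have := bfun_ge k j
      have hj1 : 1 ≤ j := (Finset.mem_Icc.mp (hS hj)).1
      omega
    have e2 : Multiset.filter (fun x => x ≠ 1)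
        (Multiset.replicate (n - S.sum (bfun k)) 1) = 0 := by
      rw [Multiset.filter_eq_nil]
      intro a ha
      rw [Multiset.eq_of_mem_replicate ha]
      simp
    rw [e1, e2, add_zero]
  have hcard : (Finset.Icc 1 m).powerset.card ≤
      (Finset.univ.filter fun p : n.Partition => ∀ i ∈ p.parts, ¬ k ∣ i).card := by
    apply Finset.card_le_card_of_injOn f
    · intro S hS
      rw [Finset.mem_coe, Finset.mem_powerset] at hS
      rw [Finset.mem_coe, Finset.mem_filter]
      refine ⟨Finset.mem_univ _, ?_⟩
      intro i hi
      have : (f S).parts = S.val.map (bfun k) + Multiset.replicate (n - S.sum (bfun k)) 1 := by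
        show (dite _ _ _ : n.Partition).parts = _
        rw [dif_pos hS]
      rw [this, Multiset.mem_add] at hi
      rcases hi with hi | hi
      · obtain ⟨j, hj, rfl⟩ := Multiset.mem_map.mp hi
        exact bfun_not_dvd k hk j (Finset.mem_Icc.mp (hS hj)).1
      · rw [Multiset.eq_of_mem_replicate hi]
        intro hd
        have := Nat.le_of_dvd one_pos hd
        omega
    · intro S hS T hT hST
      rw [Finset.coe_powerset, Set.mem_preimage, Set.mem_powerset_iff] at hS hT
      replace hS := Finset.coe_subset.mp hS
      replace hT := Finset.coe_subset.mp hT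
      have := congrArg (fun p : n.Partition => Multiset.filter (fun x => x ≠ 1) p.parts) hST
      simp only [hfilt S hS, hfilt T hT] at this
      have hv : S.val = T.val :=
        Multiset.map_injective (bfun_strictMono k).injective this
      exact Finset.val_injective hv
  rw [Finset.card_powerset, Nat.card_Icc] at hcard
  simpa [regularPartitions] using hcard

theorem regular_lower_bound_floor (k n : ℕ) (hk : 2 ≤ k) :
    (regularPartitions k n : ℝ) ≥
      (2 : ℝ) ^ (⌊Real.sqrt (2 * n / 3 + 1 / 4) - 1 / 2⌋ : ℤ) := by
  set r : ℝ := Real.sqrt (2 * n / 3 + 1 / 4) - 1 / 2 with hr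
  have hA : (0 : ℝ) ≤ 2 * n / 3 + 1 / 4 := by positivity
  have h0 : (1 / 2 : ℝ) ≤ Real.sqrt (2 * n / 3 + 1 / 4) := by
    rw [show (1/2 : ℝ) = Real.sqrt (1/4) by
      rw [show (1/4 : ℝ) = (1/2)^2 by norm_num, Real.sqrt_sq (by norm_num)]]
    apply Real.sqrt_le_sqrt
    have : (0:ℝ) ≤ (n:ℝ) := Nat.cast_nonneg n
    linarith
  have hr0 : (0 : ℝ) ≤ r := by rw [hr]; linarith
  have hfl0 : (0 : ℤ) ≤ ⌊r⌋ := Int.le_floor.mpr (by exact_mod_cast hr0)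
  set m : ℕ := (⌊r⌋).toNat with hm
  have hmr : (m : ℝ) ≤ r := by
    have : ((⌊r⌋ : ℤ) : ℝ) ≤ r := Int.floor_le r
    rwa [show ((⌊r⌋ : ℤ) : ℝ) = (m : ℝ) by rw [hm]; exact_mod_cast (Int.toNat_of_nonneg hfl0).symm] at this
  have hsq : ((m : ℝ) + 1/2)^2 ≤ 2 * n / 3 + 1 / 4 := by
    have h1 : (m : ℝ) + 1/2 ≤ Real.sqrt (2 * n / 3 + 1 / 4) := by rw [hr] at hmr; linarith
    nlinarith [Real.sq_sqrt hA, Real.sqrt_nonneg (2 * (n:ℝ) / 3 + 1 / 4)]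
  have hkey : 3 * (m * (m + 1)) ≤ 2 * n := by
    have : (3 * (m * (m + 1)) : ℝ) ≤ (2 * n : ℝ) := by push_cast; nlinarith
    exact_mod_cast this
  have hb := key k n m hk hkey
  have : (2 : ℝ) ^ (⌊r⌋ : ℤ) = (2 : ℝ) ^ m := by
    rw [show (⌊r⌋ : ℤ) = (m : ℤ) by rw [hm, Int.toNat_of_nonneg hfl0], zpow_natCast]
  rw [ge_iff_le, this]
  calc (2 : ℝ) ^ m = ((2 ^ m : ℕ) : ℝ) := by push_cast; ring
    _ ≤ (regularPartitions k n : ℝ) := by exact_mod_cast hb
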